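/- Fix n ≥ 1 and a turning pattern τ = (τ₁,…,τ_n) ∈ {L,R}^n. Over the multivariate polynomial ring ℤ[Y₁, …, Y_n], the trace of the product H'(Y₁)·E^{τ₁}·H'(Y₂)·E^{τ₂}⋯H'(Y_n)·E^{τ_n} is a polynomial whose constant coefficient equals 1. -/

import Mathlib

/-- A turning letter `L` or `R`. -/
inductive Turn : Type
  | L : Turn
  | R : Turn

/-- The rescaled diagonal matrix `H'(X) = [[X,0],[0,1]]`. -/
def Hmat {R : Type*} [CommRing R] (X : R) : Matrix (Fin 2) (Fin 2) R :=
  !![X, 0; 0, 1]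

/-- The elementary matrices `E^L = [[1,1],[0,1]]` and `E^R = [[1,0],[1,1]]`. -/
def Emat {R : Type*} [CommRing R] : Turn → Matrix (Fin 2) (Fin 2) R
  | Turn.L => !![1, 1; 0, 1]
  | Turn.R => !![1, 0; 1, 1]

lemma prod_of_form {R : Type*} [CommRing R] (l : List (Matrix (Fin 2) (Fin 2) R))
    (h : ∀ M ∈ l, ∃ a : R, M = !![0, 0; a, 1]) (hne : l ≠ []) :
    ∃ a : R, l.prod = !![0, 0; a, 1] := by
  induction l with
  | nil => exact absurd rfl hne
  | cons M t ih =>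
    obtain ⟨a, ha⟩ := h M List.mem_cons_self
    rcases eq_or_ne t [] with rfl | ht
    · exact ⟨a, by simp [ha]⟩
    · obtain ⟨b, hb⟩ := ih (fun N hN => h N (List.mem_cons_of_mem _ hN)) ht
      refine ⟨b, ?_⟩
      rw [List.prod_cons, ha, hb]
      ext i j
      fin_cases i <;> fin_cases j <;>
        simp [Matrix.mul_apply, Fin.sum_univ_two]

/-- Over `ℤ[Y₁,…,Y_n]`, the trace of `H'(Y₁)·E^{τ₁}·H'(Y₂)·E^{τ₂}⋯H'(Y_n)·E^{τ_n}`
is a polynomial with constant coefficient `1`. -/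
theorem trace_monodromy_constantCoeff (n : ℕ) (hn : 1 ≤ n) (τ : Fin n → Turn) :
    MvPolynomial.constantCoeff
      (Matrix.trace
        ((List.ofFn fun i : Fin n =>
          Hmat (MvPolynomial.X i : MvPolynomial (Fin n) ℤ) * Emat (τ i)).prod)) = 1 := by
  set φ : MvPolynomial (Fin n) ℤ →+* ℤ := MvPolynomial.constantCoeff
  have htr : ∀ M : Matrix (Fin 2) (Fin 2) (MvPolynomial (Fin n) ℤ),
      φ (Matrix.trace M) = Matrix.trace (φ.mapMatrix M) := by
    intro M
    simp [Matrix.trace, Matrix.diag, map_sum, RingHom.mapMatrix_apply]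
  rw [htr, map_list_prod, List.map_ofFn]
  have hform : ∀ M ∈ List.ofFn (φ.mapMatrix ∘ fun i : Fin n =>
      Hmat (MvPolynomial.X i : MvPolynomial (Fin n) ℤ) * Emat (τ i)),
      ∃ a : ℤ, M = !![0, 0; a, 1] := by
    intro M hM
    rw [List.mem_ofFn] at hM
    obtain ⟨i, rfl⟩ := hM
    cases hτ : τ i
    case L => refine ⟨0, ?_⟩; ext r c
              fin_cases r <;> fin_cases c <;>
                simp [Hmat, Emat, hτ, RingHom.mapMatrix_apply, Matrix.map_apply,
                  Matrix.mul_apply, Fin.sum_univ_two, φ]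
    case R =>
      refine ⟨1, ?_⟩
      ext r c
      fin_cases r <;> fin_cases c <;>
        simp [Hmat, Emat, hτ, RingHom.mapMatrix_apply, Matrix.map_apply,
          Matrix.mul_apply, Fin.sum_univ_two, φ]
  have hne : List.ofFn (φ.mapMatrix ∘ fun i : Fin n =>
      Hmat (MvPolynomial.X i : MvPolynomial (Fin n) ℤ) * Emat (τ i)) ≠ [] := by
    simp only [Function.comp, ne_eq, List.ofFn_eq_nil_iff]
    omega
  obtain ⟨a, ha⟩ := prod_of_form _ hform hne
  rw [ha]
  simp [Matrix.trace, Fin.sum_univ_two]
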